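/- For all nonnegative integers n, the following identity of rational numbers holds: \sum_{p=0}^{\lfloor n/4 \rfloor} (1/(5p+1)) \binom{5p+1}{p} \binom{n+p}{n-4p} = \sum_{p=0}^{\lfloor n/2 \rfloor} (-1)^p (1/(n+1)) \binom{n+p}{p} \binom{2n-2p}{n-2p}. -/

import Mathlib

open PowerSeries Finset

namespace SunAux

noncomputable def S (c : ℚ) (d n : ℕ) : ℚ⟦X⟧ :=
  PowerSeries.mk fun k => if d ∣ k then c ^ (k / d) * ((n + k / d).choose (k / d) : ℚ) else 0

lemma coeff_S (c : ℚ) (d n k : ℕ) :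
    (PowerSeries.coeff (R := ℚ) k) (S c d n) =
      if d ∣ k then c ^ (k / d) * ((n + k / d).choose (k / d) : ℚ) else 0 :=
  coeff_mk _ _

lemma coeff_sub_shift (A : ℚ⟦X⟧) (c : ℚ) (d k : ℕ) :
    (PowerSeries.coeff (R := ℚ) k) (A * (1 - PowerSeries.C (R := ℚ) c * X ^ d)) =
      (PowerSeries.coeff (R := ℚ) k) A -
        c * (if d ≤ k then (PowerSeries.coeff (R := ℚ) (k - d)) A else 0) := by
  rw [mul_sub, mul_one, map_sub, ← mul_assoc, mul_comm A (PowerSeries.C (R := ℚ) c),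
    mul_assoc, coeff_C_mul, coeff_mul_X_pow']

lemma not_dvd_sub {d k : ℕ} (hdk : ¬ d ∣ k) (h1 : d ≤ k) : ¬ d ∣ k - d := by
  intro h2
  obtain ⟨m, hm⟩ := h2
  exact hdk ⟨m + 1, by rw [Nat.mul_add, ← hm]; omega⟩

lemma S_mul_base (c : ℚ) (d : ℕ) (hd : 0 < d) (n : ℕ) :
    S c d (n + 1) * (1 - PowerSeries.C (R := ℚ) c * X ^ d) = S c d n := by
  ext k
  rw [coeff_sub_shift, coeff_S, coeff_S, coeff_S]
  by_cases hdk : d ∣ k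
  · obtain ⟨j, rfl⟩ := hdk
    have hdvd : d ∣ d * j := Dvd.intro j rfl
    rw [if_pos hdvd, if_pos hdvd, Nat.mul_div_cancel_left _ hd]
    rcases j with _ | j
    · rw [if_neg (show ¬ d ≤ d * 0 by omega)]
      simp
    · have h1 : d ≤ d * (j + 1) := by nlinarith
      have h2 : d * (j + 1) - d = d * j := by
        have : d * (j + 1) = d * j + d := by ring
        omega
      rw [if_pos h1, h2, if_pos (show d ∣ d * j from Dvd.intro j rfl),
        Nat.mul_div_cancel_left _ hd]
      have hp : (n + 1 + (j + 1)).choose (j + 1)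
          = (n + 1 + j).choose j + (n + 1 + j).choose (j + 1) := by
        rw [show n + 1 + (j + 1) = (n + 1 + j) + 1 from by ring]
        exact Nat.choose_succ_succ _ _
      rw [hp, show n + 1 + j = n + (j + 1) from by ring]
      push_cast
      ring
  · rw [if_neg hdk, if_neg hdk]
    rcases le_or_gt d k with h1 | h1
    · rw [if_pos h1, if_neg (not_dvd_sub hdk h1)]
      ring
    · rw [if_neg (show ¬ d ≤ k by omega)]
      ring

lemma S_zero_mul (c : ℚ) (d : ℕ) (hd : 0 < d) :
    S c d 0 * (1 - PowerSeries.C (R := ℚ) c * X ^ d) = 1 := by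
  ext k
  rw [coeff_sub_shift, coeff_S, coeff_S, coeff_one]
  by_cases hdk : d ∣ k
  · obtain ⟨j, rfl⟩ := hdk
    have hdvd : d ∣ d * j := Dvd.intro j rfl
    rw [if_pos hdvd, Nat.mul_div_cancel_left _ hd]
    rcases j with _ | j
    · rw [if_neg (show ¬ d ≤ d * 0 by omega), if_pos (show d * 0 = 0 by omega)]
      simp
    · have h1 : d ≤ d * (j + 1) := by nlinarith
      have h2 : d * (j + 1) - d = d * j := by
        have : d * (j + 1) = d * j + d := by ring
        omega
      rw [if_pos h1, h2, if_pos (show d ∣ d * j from Dvd.intro j rfl),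
        Nat.mul_div_cancel_left _ hd,
        if_neg (show ¬ d * (j + 1) = 0 by positivity)]
      simp [pow_succ]
      ring
  · rw [if_neg hdk, if_neg (show ¬ k = 0 by rintro rfl; exact hdk (dvd_zero d))]
    rcases le_or_gt d k with h1 | h1
    · rw [if_pos h1, if_neg (not_dvd_sub hdk h1)]
      ring
    · rw [if_neg (show ¬ d ≤ k by omega)]
      ring

lemma S_mul (c : ℚ) (d : ℕ) (hd : 0 < d) (n : ℕ) :
    S c d n * (1 - PowerSeries.C (R := ℚ) c * X ^ d) ^ (n + 1) = 1 := by
  induction n with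
  | zero => rw [pow_one]; exact S_zero_mul c d hd
  | succ n ih =>
    calc S c d (n + 1) * (1 - PowerSeries.C (R := ℚ) c * X ^ d) ^ (n + 2)
        = (S c d (n + 1) * (1 - PowerSeries.C (R := ℚ) c * X ^ d)) *
            (1 - PowerSeries.C (R := ℚ) c * X ^ d) ^ (n + 1) := by ring
      _ = S c d n * (1 - PowerSeries.C (R := ℚ) c * X ^ d) ^ (n + 1) := by
            rw [S_mul_base c d hd n]
      _ = 1 := ih

end SunAux

namespace SunAux

lemma key (n : ℕ) :
    (1 + X : ℚ⟦X⟧) ^ (n + 1) * S 1 4 n = S 1 1 n * S (-1) 2 n := by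
  have h4 : S 1 4 n * (1 - X ^ 4 : ℚ⟦X⟧) ^ (n + 1) = 1 := by
    have := S_mul 1 4 (by norm_num) n
    simpa using this
  have h1 : S 1 1 n * (1 - X : ℚ⟦X⟧) ^ (n + 1) = 1 := by
    have := S_mul 1 1 (by norm_num) n
    simpa using this
  have h2 : S (-1) 2 n * (1 + X ^ 2 : ℚ⟦X⟧) ^ (n + 1) = 1 := by
    have := S_mul (-1) 2 (by norm_num) n
    simpa [sub_neg_eq_add] using this
  set P : ℚ⟦X⟧ := ((1 - X) * (1 + X ^ 2)) ^ (n + 1) with hP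
  have hb : ((1 + X) : ℚ⟦X⟧) ^ (n + 1) * ((1 - X) * (1 + X ^ 2)) ^ (n + 1)
      = (1 - X ^ 4) ^ (n + 1) := by
    rw [← mul_pow]
    congr 1
    ring
  have hL : ((1 + X : ℚ⟦X⟧) ^ (n + 1) * S 1 4 n) * P = 1 := by
    calc ((1 + X : ℚ⟦X⟧) ^ (n + 1) * S 1 4 n) * P
        = S 1 4 n * ((1 + X) ^ (n + 1) * ((1 - X) * (1 + X ^ 2)) ^ (n + 1)) := by
          rw [hP]; ring
      _ = S 1 4 n * (1 - X ^ 4) ^ (n + 1) := by rw [hb]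
      _ = 1 := h4
  have hR : (S 1 1 n * S (-1) 2 n) * P = 1 := by
    calc (S 1 1 n * S (-1) 2 n) * P
        = (S 1 1 n * (1 - X) ^ (n + 1)) * (S (-1) 2 n * (1 + X ^ 2) ^ (n + 1)) := by
          rw [hP, mul_pow]; ring
      _ = 1 := by rw [h1, h2, one_mul]
  calc (1 + X : ℚ⟦X⟧) ^ (n + 1) * S 1 4 n
      = ((1 + X) ^ (n + 1) * S 1 4 n) * ((S 1 1 n * S (-1) 2 n) * P) := by
        rw [hR, mul_one]
    _ = (S 1 1 n * S (-1) 2 n) * (((1 + X) ^ (n + 1) * S 1 4 n) * P) := by ring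
    _ = S 1 1 n * S (-1) 2 n := by rw [hL, mul_one]

lemma sum_if_dvd (d : ℕ) (hd : 0 < d) (N : ℕ) (h : ℕ → ℚ) :
    ∑ j ∈ range N, (if d ∣ j then h (j / d) else 0) = ∑ p ∈ range ((N + d - 1) / d), h p := by
  induction N with
  | zero => simp [Nat.div_eq_of_lt (show d - 1 < d by omega)]
  | succ N ih =>
    rw [sum_range_succ, ih]
    by_cases hdN : d ∣ N
    · obtain ⟨m, rfl⟩ := hdN
      rw [if_pos (Dvd.intro m rfl)]
      have e1 : (d * m + 1 + d - 1) / d = m + 1 := by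
        rw [show d * m + 1 + d - 1 = d * m + d by omega, Nat.mul_add_div hd, Nat.div_self hd]
      have e2 : (d * m + d - 1) / d = m := by
        rw [show d * m + d - 1 = d * m + (d - 1) by omega, Nat.mul_add_div hd,
          Nat.div_eq_of_lt (show d - 1 < d by omega), Nat.add_zero]
      rw [e1, e2, sum_range_succ, Nat.mul_div_cancel_left _ hd]
    · rw [if_neg hdN, add_zero]
      have e3 : (N + 1 + d - 1) / d = (N + d - 1) / d := by
        rw [show N + 1 + d - 1 = (N + d - 1) + 1 by omega]
        refine Nat.succ_div_of_not_dvd ?_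
        rw [show N + d - 1 + 1 = N + d by omega]
        intro hdvd
        exact hdN ((Nat.dvd_add_right (dvd_refl d)).mp (by rwa [add_comm] at hdvd))
      rw [e3]

lemma coeff_S_mul_gen (c : ℚ) (d : ℕ) (hd : 0 < d) (m n : ℕ) (A : ℚ⟦X⟧) :
    (PowerSeries.coeff (R := ℚ) n) (S c d m * A) =
      ∑ p ∈ range (n / d + 1),
        c ^ p * ((m + p).choose p : ℚ) * (PowerSeries.coeff (R := ℚ) (n - d * p)) A := by
  rw [coeff_mul, Finset.Nat.sum_antidiagonal_eq_sum_range_succ_mk]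
  have step1 : ∀ j ∈ range (n + 1),
      (PowerSeries.coeff (R := ℚ) j) (S c d m) * (PowerSeries.coeff (R := ℚ) (n - j)) A =
        (if d ∣ j then
          c ^ (j / d) * ((m + j / d).choose (j / d) : ℚ) *
            (PowerSeries.coeff (R := ℚ) (n - d * (j / d))) A else 0) := by
    intro j _
    rw [coeff_S]
    by_cases hdj : d ∣ j
    · rw [if_pos hdj, if_pos hdj, Nat.mul_div_cancel' hdj]
    · rw [if_neg hdj, if_neg hdj, zero_mul]
  rw [sum_congr rfl step1]
  have hrange : (n + 1 + d - 1) / d = n / d + 1 := by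
    rw [show n + 1 + d - 1 = n + d by omega, Nat.add_div_right _ hd]
  exact (sum_if_dvd d hd (n + 1)
    (fun p => c ^ p * ((m + p).choose p : ℚ) * (PowerSeries.coeff (R := ℚ) (n - d * p)) A)).trans
    (by rw [hrange])

lemma coeff_one_add_X_pow (m k : ℕ) :
    (PowerSeries.coeff (R := ℚ) k) ((1 + X) ^ m) = (m.choose k : ℚ) := by
  rw [show (1 + X : ℚ⟦X⟧) = X + 1 by ring, add_pow]
  simp only [one_pow, mul_one, map_sum]
  simp only [← map_natCast (PowerSeries.C (R := ℚ)), coeff_mul_C, coeff_X_pow, ite_mul, one_mul,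
    zero_mul]
  rw [Finset.sum_ite_eq (range (m + 1)) k]
  split_ifs with h
  · rfl
  · rw [mem_range, not_lt] at h
    rw [Nat.choose_eq_zero_of_lt (by omega)]
    simp

end SunAux

namespace SunAux

lemma coeff_S_one_one (n k : ℕ) :
    (PowerSeries.coeff (R := ℚ) k) (S 1 1 n) = ((n + k).choose k : ℚ) := by
  rw [coeff_S, if_pos (one_dvd k)]
  simp [Nat.div_one]

lemma lhs_coeff (n : ℕ) :
    (PowerSeries.coeff (R := ℚ) n) ((1 + X) ^ (n + 1) * S 1 4 n) =
      ∑ p ∈ range (n / 4 + 1),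
        ((n + p).choose p : ℚ) * ((n + 1).choose (n - 4 * p) : ℚ) := by
  rw [mul_comm, coeff_S_mul_gen 1 4 (by norm_num) n n]
  refine sum_congr rfl fun p _ => ?_
  rw [coeff_one_add_X_pow, one_pow, one_mul]

lemma rhs_coeff (n : ℕ) :
    (PowerSeries.coeff (R := ℚ) n) (S 1 1 n * S (-1) 2 n) =
      ∑ p ∈ range (n / 2 + 1),
        (-1 : ℚ) ^ p * ((n + p).choose p : ℚ) * ((2 * n - 2 * p).choose (n - 2 * p) : ℚ) := by
  rw [mul_comm, coeff_S_mul_gen (-1) 2 (by norm_num) n n]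
  refine sum_congr rfl fun p hp => ?_
  have h2p : 2 * p ≤ n := by
    have := mem_range.mp hp
    omega
  rw [coeff_S_one_one, show n + (n - 2 * p) = 2 * n - 2 * p by omega]

lemma termwise (n p : ℕ) (hp : 4 * p ≤ n) :
    (1 : ℚ) / (5 * p + 1) * ((5 * p + 1).choose p : ℚ) * ((n + p).choose (n - 4 * p) : ℚ) =
      1 / (n + 1) * (((n + p).choose p : ℚ) * ((n + 1).choose (n - 4 * p) : ℚ)) := by
  rw [Nat.cast_choose ℚ (show p ≤ 5 * p + 1 by omega),
    Nat.cast_choose ℚ (show n - 4 * p ≤ n + p by omega),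
    Nat.cast_choose ℚ (show p ≤ n + p by omega),
    Nat.cast_choose ℚ (show n - 4 * p ≤ n + 1 by omega),
    show 5 * p + 1 - p = 4 * p + 1 by omega, show (n + p) - (n - 4 * p) = 5 * p by omega,
    show (n + p) - p = n by omega, show (n + 1) - (n - 4 * p) = 4 * p + 1 by omega,
    show Nat.factorial (5 * p + 1) = (5 * p + 1) * Nat.factorial (5 * p) from
      Nat.factorial_succ (5 * p),
    show Nat.factorial (n + 1) = (n + 1) * Nat.factorial n from Nat.factorial_succ n]
  have f1 : ((Nat.factorial (5 * p) : ℚ)) ≠ 0 := by positivity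
  have f2 : ((Nat.factorial (4 * p + 1) : ℚ)) ≠ 0 := by positivity
  have f3 : ((Nat.factorial p : ℚ)) ≠ 0 := by positivity
  have f4 : ((Nat.factorial (n - 4 * p) : ℚ)) ≠ 0 := by positivity
  have f5 : ((Nat.factorial n : ℚ)) ≠ 0 := by positivity
  have f6 : (5 * (p : ℚ) + 1) ≠ 0 := by positivity
  have f7 : ((n : ℚ) + 1) ≠ 0 := by positivity
  push_cast
  field_simp

end SunAux

/-- **Sun's identity for generalized Catalan numbers `C_{1,5}`** (Formula (2)).
For all nonnegative integers `n`,
`∑_{p=0}^{⌊n/4⌋} (1/(5p+1)) C(5p+1, p) C(n+p, n-4p)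
  = ∑_{p=0}^{⌊n/2⌋} (-1)^p (1/(n+1)) C(n+p, p) C(2n-2p, n-2p)`. -/
theorem sun_identity (n : ℕ) :
    ∑ p ∈ Finset.range (n / 4 + 1),
        (1 : ℚ) / (5 * p + 1) * ((5 * p + 1).choose p) * ((n + p).choose (n - 4 * p)) =
      ∑ p ∈ Finset.range (n / 2 + 1),
        (-1 : ℚ) ^ p * (1 / (n + 1)) * ((n + p).choose p) * ((2 * n - 2 * p).choose (n - 2 * p)) := by
  classical
  have hc := congrArg (PowerSeries.coeff (R := ℚ) n) (SunAux.key n)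
  rw [SunAux.lhs_coeff, SunAux.rhs_coeff] at hc
  calc ∑ p ∈ Finset.range (n / 4 + 1),
        (1 : ℚ) / (5 * p + 1) * ((5 * p + 1).choose p) * ((n + p).choose (n - 4 * p))
      = ∑ p ∈ Finset.range (n / 4 + 1),
          1 / ((n : ℚ) + 1) * (((n + p).choose p : ℚ) * ((n + 1).choose (n - 4 * p) : ℚ)) := by
        refine Finset.sum_congr rfl fun p hp => ?_
        have : 4 * p ≤ n := by
          have := Finset.mem_range.mp hp
          omega
        exact SunAux.termwise n p this
    _ = 1 / ((n : ℚ) + 1) * ∑ p ∈ Finset.range (n / 4 + 1),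
          (((n + p).choose p : ℚ) * ((n + 1).choose (n - 4 * p) : ℚ)) := by
        rw [Finset.mul_sum]
    _ = 1 / ((n : ℚ) + 1) * ∑ p ∈ Finset.range (n / 2 + 1),
          (-1 : ℚ) ^ p * ((n + p).choose p : ℚ) * ((2 * n - 2 * p).choose (n - 2 * p) : ℚ) := by
        rw [hc]
    _ = _ := by
        rw [Finset.mul_sum]
        refine Finset.sum_congr rfl fun p hp => ?_
        ring
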